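/- In an ICC digraph with k ≥ 2 Type-I paths, every directed cycle contains at least two terminal vertices of Type-I paths, i.e., at least two vertices from the set {v_{n_i}^i : i = 1,…,k}. -/

import Mathlib

/-- An ICC digraph with `k` Type-I paths. `n1 i ≥ 1` is the number of vertices of
Type-I path `P_i`; `n2 i j` is the number of vertices of Type-II path `P_{i,j}`
(`0` if empty, and `n2 i i = 0`); `q i j` (1-based, `1 ≤ q i j ≤ n1 j`) is the
index of the vertex of `P_j` that the arc leaving `P_{i,j}` (or, if `P_{i,j}` is
empty, the arc leaving the terminal vertex of `P_i`) points to. -/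
structure ICCDigraph (k : ℕ) where
  n1 : Fin k → ℕ
  hn1 : ∀ i, 1 ≤ n1 i
  n2 : Fin k → Fin k → ℕ
  hdiag : ∀ i, n2 i i = 0
  q : Fin k → Fin k → ℕ
  hq1 : ∀ i j, 1 ≤ q i j
  hq2 : ∀ i j, q i j ≤ n1 j

namespace ICCDigraph

variable {k : ℕ} (D : ICCDigraph k)

/-- The vertex set: vertices `v_{a+1}^i = ⟨i, a⟩` of Type-I paths (0-based `a`),
and vertices `v_{b+1}^{ij} = ⟨(i,j), b⟩` of Type-II paths. -/
abbrev Vtx : Type :=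
  (Σ i : Fin k, Fin (D.n1 i)) ⊕ (Σ p : Fin k × Fin k, Fin (D.n2 p.1 p.2))

/-- The terminal vertex `v_{n_i}^i` of Type-I path `P_i`. -/
def terminal (i : Fin k) : D.Vtx :=
  Sum.inl ⟨i, ⟨D.n1 i - 1, by have := D.hn1 i; omega⟩⟩

/-- The arc relation of the ICC digraph: arcs along Type-I and Type-II paths,
and the interconnecting arcs. -/
def Arc : D.Vtx → D.Vtx → Prop
  | Sum.inl ⟨i, a⟩, Sum.inl ⟨j, a'⟩ =>
      (i = j ∧ (a' : ℕ) = (a : ℕ) + 1) ∨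
      (i ≠ j ∧ (a : ℕ) = D.n1 i - 1 ∧ D.n2 i j = 0 ∧ (a' : ℕ) = D.q i j - 1)
  | Sum.inl ⟨i, a⟩, Sum.inr ⟨p, b⟩ =>
      i = p.1 ∧ (a : ℕ) = D.n1 i - 1 ∧ (b : ℕ) = 0
  | Sum.inr ⟨p, b⟩, Sum.inr ⟨p', b'⟩ =>
      p = p' ∧ (b' : ℕ) = (b : ℕ) + 1
  | Sum.inr ⟨p, b⟩, Sum.inl ⟨j, a⟩ =>
      p.2 = j ∧ (b : ℕ) = D.n2 p.1 p.2 - 1 ∧ (a : ℕ) = D.q p.1 p.2 - 1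

/-- A closed directed walk (cycle) starting and ending at `v`, visiting the
vertices `v :: l`. -/
def IsClosedWalk (v : D.Vtx) (l : List D.Vtx) : Prop :=
  List.Chain D.Arc v (l ++ [v])

/-- `S` induces an acyclic subdigraph: no directed cycle lies within `S`. -/
def AcyclicOn (S : Finset D.Vtx) : Prop :=
  ¬ ∃ (v : D.Vtx) (l : List D.Vtx), v ∈ S ∧ (∀ u ∈ l, u ∈ S) ∧ D.IsClosedWalk v l

open Classical in
/-- `MAIS(D)`: the maximum order of an acyclic induced subdigraph. -/
noncomputable def mais : ℕ :=
  (Finset.univ.filter fun S : Finset D.Vtx => D.AcyclicOn S).sup Finset.card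

/-- The message (1-based index `a`) of the `a`-th vertex of Type-I path `P_i`
(`0` if out of range). -/
def msgI {t : ℕ} (x : D.Vtx → Fin t → ZMod 2) (i : Fin k) (a : ℕ) :
    Fin t → ZMod 2 :=
  if h : 1 ≤ a ∧ a ≤ D.n1 i then x (Sum.inl ⟨i, ⟨a - 1, by omega⟩⟩) else 0

/-- The message (1-based index `b`) of the `b`-th vertex of Type-II path
`P_{i,j}` (`0` if out of range). -/
def msgII {t : ℕ} (x : D.Vtx → Fin t → ZMod 2) (i j : Fin k) (b : ℕ) :
    Fin t → ZMod 2 :=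
  if h : 1 ≤ b ∧ b ≤ D.n2 i j then x (Sum.inr ⟨(i, j), ⟨b - 1, by show b - 1 < D.n2 i j; omega⟩⟩) else 0

/-- Index set of the ICC code's codewords: the `n_i - 1` codewords along each
Type-I path, the `n_{ij} - 1` codewords along each Type-II path, one codeword per
nonempty Type-II path, and the single codeword `⊕ᵢ x_{n_i}^i`. -/
abbrev CodeIdx : Type :=
  (Σ i : Fin k, Fin (D.n1 i - 1)) ⊕
    ((Σ p : Fin k × Fin k, Fin (D.n2 p.1 p.2 - 1)) ⊕
      (({p : Fin k × Fin k // 1 ≤ D.n2 p.1 p.2}) ⊕ Unit))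

/-- The ICC code: `w_a^i = x_a^i ⊕ x_{a+1}^i`, `w_b^{ij} = x_b^{ij} ⊕ x_{b+1}^{ij}`,
`w_{n_{ij}}^{ij} = x_{n_{ij}}^{ij} ⊕ x_{q_i}^j`, and `w' = ⊕ᵢ x_{n_i}^i`. -/
def code {t : ℕ} (x : D.Vtx → Fin t → ZMod 2) : D.CodeIdx → Fin t → ZMod 2
  | Sum.inl ⟨i, a⟩ => D.msgI x i ((a : ℕ) + 1) + D.msgI x i ((a : ℕ) + 2)
  | Sum.inr (Sum.inl ⟨p, b⟩) =>
      D.msgII x p.1 p.2 ((b : ℕ) + 1) + D.msgII x p.1 p.2 ((b : ℕ) + 2)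
  | Sum.inr (Sum.inr (Sum.inl ⟨p, _⟩)) =>
      D.msgII x p.1 p.2 (D.n2 p.1 p.2) + D.msgI x p.2 (D.q p.1 p.2)
  | Sum.inr (Sum.inr (Sum.inr _)) => ∑ i : Fin k, D.msgI x i (D.n1 i)

end ICCDigraph

namespace ICCDigraph

variable {k : ℕ} (D : ICCDigraph k)

def owner : D.Vtx → Fin k
  | Sum.inl ⟨i, _⟩ => i
  | Sum.inr ⟨p, _⟩ => p.2

def gmeas : D.Vtx → ℕ
  | Sum.inl ⟨i, a⟩ => D.n1 i - 1 - (a : ℕ)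
  | Sum.inr ⟨p, b⟩ => (D.n2 p.1 p.2 - 1 - (b : ℕ)) + 1 + (D.n1 p.2 - D.q p.1 p.2)

lemma inl_eq_terminal {i : Fin k} {a : Fin (D.n1 i)} (h : (a : ℕ) = D.n1 i - 1) :
    (Sum.inl ⟨i, a⟩ : D.Vtx) = D.terminal i := by
  unfold terminal
  congr 1
  exact Sigma.ext rfl (heq_of_eq (Fin.ext h))

lemma step {u u' : D.Vtx} (h : D.Arc u u') (hne : u ≠ D.terminal (D.owner u)) :
    D.owner u' = D.owner u ∧ D.gmeas u' < D.gmeas u := by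
  obtain (⟨i, a⟩ | ⟨p, b⟩) := u <;> obtain (⟨j, a'⟩ | ⟨p', b'⟩) := u'
  · simp only [Arc] at h
    rcases h with ⟨rfl, h2⟩ | ⟨_, h2, _⟩
    · have ha : (a : ℕ) ≠ D.n1 i - 1 := fun he => hne (D.inl_eq_terminal he)
      have := a.isLt; have := a'.isLt
      exact ⟨rfl, by simp only [gmeas]; omega⟩
    · exact absurd (D.inl_eq_terminal h2) hne
  · simp only [Arc] at h
    exact absurd (D.inl_eq_terminal h.2.1) hne
  · simp only [Arc] at h
    obtain ⟨h1, h2, h3⟩ := h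
    have hb := b.isLt
    have ha := a'.isLt
    have hq1 := D.hq1 p.1 p.2
    have hq2 := D.hq2 p.1 p.2
    refine ⟨h1.symm, ?_⟩
    subst h1
    simp only [gmeas]
    omega
  · simp only [Arc] at h
    obtain ⟨rfl, h2⟩ := h
    have := b'.isLt
    exact ⟨rfl, by simp only [gmeas]; omega⟩

lemma owner_terminal (i : Fin k) : D.owner (D.terminal i) = i := rfl

lemma step_terminal {i : Fin k} {u' : D.Vtx} (h : D.Arc (D.terminal i) u') :
    D.owner u' ≠ i := by
  unfold terminal at h
  obtain (⟨j, a'⟩ | ⟨p, b⟩) := u'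
  · simp only [Arc] at h
    rcases h with ⟨rfl, h2⟩ | ⟨h1, _⟩
    · have := a'.isLt
      have := D.hn1 i
      have h2' : (a' : ℕ) = D.n1 i - 1 + 1 := h2
      omega
    · exact fun he => h1 he.symm
  · simp only [Arc] at h
    obtain ⟨h1, _⟩ := h
    have hb := b.isLt
    intro he
    have he' : p.2 = i := he
    have h0 : D.n2 p.1 p.2 = 0 := by rw [he'.trans h1]; exact D.hdiag p.1
    omega

end ICCDigraph

/-- In an ICC digraph with `k ≥ 2` Type-I paths, every directed
cycle contains at least two (distinct) terminal vertices of Type-I paths. -/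
theorem stmt3 {k : ℕ} (hk : 2 ≤ k) (D : ICCDigraph k)
    (v : D.Vtx) (l : List D.Vtx) (hc : D.IsClosedWalk v l) :
    ∃ i j : Fin k, i ≠ j ∧ D.terminal i ∈ v :: l ∧ D.terminal j ∈ v :: l := by
  classical
  have hc' : List.Chain' D.Arc (v :: (l ++ [v])) := hc
  have hlen : (v :: (l ++ [v])).length = l.length + 2 := by simp
  have hmod : ∀ m : ℕ, m % (l.length + 1) < l.length + 1 := fun m => Nat.mod_lt _ (by omega)
  let w : ℕ → D.Vtx := fun m =>
    (v :: (l ++ [v]))[m % (l.length + 1)]'(by rw [hlen]; exact (hmod m).trans (by omega))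
  have hmem : ∀ m, w m ∈ v :: l := by
    intro m
    have h1 : w m ∈ v :: (l ++ [v]) := List.getElem_mem _
    simp only [List.mem_cons, List.mem_append, List.mem_singleton] at h1 ⊢
    tauto
  have harc : ∀ m, D.Arc (w m) (w (m + 1)) := by
    intro m
    have hchain := List.isChain_iff_getElem.mp hc'
    have ht : m % (l.length + 1) < l.length + 1 := hmod m
    have hmm : (m + 1) % (l.length + 1) = (m % (l.length + 1) + 1) % (l.length + 1) :=
      (Nat.mod_add_mod m (l.length + 1) 1).symm
    by_cases hlast : m % (l.length + 1) = l.length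
    · have h1 : (m + 1) % (l.length + 1) = 0 := by
        rw [hmm, hlast, Nat.mod_self]
      have h2 := hchain l.length (by rw [hlen]; omega)
      have hvv : (v :: (l ++ [v])).get ⟨l.length + 1, by rw [hlen]; omega⟩ = v := by
        simp only [List.get_eq_getElem, List.getElem_cons_succ]
        simp
      rw [show (v :: (l ++ [v]))[l.length + 1] = v from hvv] at h2
      show D.Arc ((v :: (l ++ [v]))[m % (l.length + 1)]'_) ((v :: (l ++ [v]))[(m+1) % (l.length + 1)]'_)
      simp only [hlast, h1, List.getElem_cons_zero]
      simpa only [List.get_eq_getElem] using h2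
    · have h1 : (m + 1) % (l.length + 1) = m % (l.length + 1) + 1 := by
        rw [hmm, Nat.mod_eq_of_lt (by omega)]
      have h2 := hchain (m % (l.length + 1)) (by rw [hlen]; omega)
      show D.Arc ((v :: (l ++ [v]))[m % (l.length + 1)]'_) ((v :: (l ++ [v]))[(m+1) % (l.length + 1)]'_)
      simp only [h1]
      simpa only [List.get_eq_getElem] using h2
  have reach : ∀ N m, D.gmeas (w m) ≤ N → ∃ m', w m' = D.terminal (D.owner (w m)) := by
    intro N
    induction N with
    | zero =>
      intro m hm
      by_cases he : w m = D.terminal (D.owner (w m))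
      · exact ⟨m, he⟩
      · have := (D.step (harc m) he).2; omega
    | succ N ih =>
      intro m hm
      by_cases he : w m = D.terminal (D.owner (w m))
      · exact ⟨m, he⟩
      · obtain ⟨ho, hg⟩ := D.step (harc m) he
        obtain ⟨m', hm'⟩ := ih (m + 1) (by omega)
        exact ⟨m', by rw [hm', ho]⟩
  obtain ⟨m, hm⟩ := reach (D.gmeas (w 0)) 0 le_rfl
  have harc' : D.Arc (D.terminal (D.owner (w 0))) (w (m + 1)) := hm ▸ harc m
  have hne : D.owner (w (m + 1)) ≠ D.owner (w 0) := D.step_terminal harc'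
  obtain ⟨m', hm'⟩ := reach (D.gmeas (w (m + 1))) (m + 1) le_rfl
  refine ⟨D.owner (w 0), D.owner (w (m + 1)), fun he => hne he.symm, ?_, ?_⟩
  · rw [← hm]; exact hmem m
  · rw [← hm']; exact hmem m'
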